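/- For every rational p > 1, the points Q = (3p(p³−6p²+p−12), 0) and P = (3p²(p²−6p+1), 108p²(p+1)) lie on the elliptic curve E_p : Y² = X³ − 27p²(p⁶−12p⁵+38p⁴−36p³+49p²−24p+48)X + 54p⁴(p³−6p²+p−12)(p⁵−12p⁴+38p³−36p²+p−24). Moreover the discriminant quantity 544195584·p⁶(p⁴−10p³+17p²+8p+16)(p−1)²(p²+1)² is nonzero for all rational p > 1. -/

import Mathlib

theorem aux_rr (n : ℤ) (hn : 2 ≤ n) (heq : n^4-10*n^3+17*n^2+8*n+16 = 0) : False := by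
  have hdvd : n ∣ 16 := ⟨-n^3+10*n^2-17*n-8, by linarith⟩
  have hle : n ≤ 16 := Int.le_of_dvd (by norm_num) hdvd
  interval_cases n <;> norm_num at heq

theorem stmt11 (p : ℚ) (hp : 1 < p) :
    (let QX : ℚ := 3*p*(p^3-6*p^2+p-12); let QY : ℚ := 0;
     QY^2 = QX^3 - 27*p^2*(p^6-12*p^5+38*p^4-36*p^3+49*p^2-24*p+48)*QX
       + 54*p^4*(p^3-6*p^2+p-12)*(p^5-12*p^4+38*p^3-36*p^2+p-24)) ∧
    (let PX : ℚ := 3*p^2*(p^2-6*p+1); let PY : ℚ := 108*p^2*(p+1);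
     PY^2 = PX^3 - 27*p^2*(p^6-12*p^5+38*p^4-36*p^3+49*p^2-24*p+48)*PX
       + 54*p^4*(p^3-6*p^2+p-12)*(p^5-12*p^4+38*p^3-36*p^2+p-24)) ∧
    544195584*p^6*(p^4-10*p^3+17*p^2+8*p+16)*(p-1)^2*(p^2+1)^2 ≠ 0 := by
  refine ⟨by ring, by ring, ?_⟩
  intro h
  have hp0 : (0:ℚ) < p := lt_trans one_pos hp
  -- extract the quartic vanishing
  have hq : p^4-10*p^3+17*p^2+8*p+16 = 0 := by
    by_contra hq
    have hne : 544195584*p^6*(p^4-10*p^3+17*p^2+8*p+16)*(p-1)^2*(p^2+1)^2 ≠ 0 := by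
      apply mul_ne_zero
      apply mul_ne_zero
      apply mul_ne_zero
      · apply mul_ne_zero (by norm_num)
        positivity
      · exact hq
      · exact pow_ne_zero _ (sub_ne_zero.mpr (ne_of_gt hp))
      · positivity
    exact hne h
  -- rational root argument
  set n : ℤ := p.num with hn
  set d : ℤ := (p.den : ℤ) with hd
  have hdpos : 0 < d := by rw [hd]; exact_mod_cast p.pos
  have hdq : ((d:ℚ)) ≠ 0 := by positivity
  have hpnd : (n:ℚ) = p * d := by
    rw [hn, hd]
    push_cast
    field_simp [Rat.num_div_den]
    exact (Rat.mul_den_eq_num p).symm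
  have key : (n:ℚ)^4 - 10*n^3*d + 17*n^2*d^2 + 8*n*d^3 + 16*d^4 = 0 := by
    rw [hpnd]
    linear_combination (d:ℚ)^4 * hq
  have keyZ : n^4 - 10*n^3*d + 17*n^2*d^2 + 8*n*d^3 + 16*d^4 = 0 := by
    exact_mod_cast key
  have hdvd : d ∣ n^4 := ⟨10*n^3 - 17*n^2*d - 8*n*d^2 - 16*d^3, by linarith⟩
  have hcop : IsCoprime d n := by
    rw [Int.isCoprime_iff_gcd_eq_one, Int.gcd_comm]
    exact p.reduced
  have hunit : IsUnit d := (hcop.pow_right).isUnit_of_dvd' dvd_rfl hdvd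
  have hd1 : d = 1 := by
    rcases Int.isUnit_iff.mp hunit with h1 | h1
    · exact h1
    · omega
  have hpn : p = (n:ℚ) := by rw [hpnd, hd1]; push_cast; ring
  have hn2 : 2 ≤ n := by
    have : (1:ℚ) < (n:ℚ) := by rw [← hpn]; exact hp
    have h1n : (1:ℤ) < n := by exact_mod_cast this
    omega
  have heqn : n^4-10*n^3+17*n^2+8*n+16 = 0 := by
    have := keyZ; rw [hd1] at this; linarith
  exact aux_rr n hn2 heqn
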